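/- Fix k ≥ 2, a real symmetric positive definite k×k matrix Σ and μ ∈ ℝ^k, and suppose s > 0 and R_GMV > 0. For γ ≥ γ_min let ω*(γ) = Σ⁻¹[ (−𝟏 + (γ+1)μ/X(γ))·(Y(γ)/γ) − X(γ)·μ ]. Then ω*(γ) converges, as γ → ∞, to the Sharpe-ratio portfolio Σ⁻¹μ/(𝟏ᵀΣ⁻¹μ). -/

import Mathlib

open Matrix Filter

set_option maxHeartbeats 1000000 in
/-- As the relative risk aversion `γ` tends to infinity, the optimal
power-utility portfolio `ω*(γ) = Σ⁻¹[(−𝟏 + (γ+1)μ/X(γ))·(Y(γ)/γ) − X(γ)·μ]`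
converges to the Sharpe-ratio portfolio `Σ⁻¹μ/(𝟏ᵀΣ⁻¹μ)`. -/
theorem power_utility_portfolio_tendsto_sharpe
    {k : ℕ} (hk : 2 ≤ k)
    (S : Matrix (Fin k) (Fin k) ℝ) (hS : S.PosDef) (μ : Fin k → ℝ)
    (one : Fin k → ℝ) (hone : one = fun _ => (1 : ℝ))
    (R V : ℝ)
    (hR : R = (one ⬝ᵥ (S⁻¹ *ᵥ μ)) / (one ⬝ᵥ (S⁻¹ *ᵥ one)))
    (hV : V = (one ⬝ᵥ (S⁻¹ *ᵥ one))⁻¹)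
    (Q : Matrix (Fin k) (Fin k) ℝ)
    (hQ : Q = S⁻¹ - (one ⬝ᵥ (S⁻¹ *ᵥ one))⁻¹ • vecMulVec (S⁻¹ *ᵥ one) (one ᵥ* S⁻¹))
    (s : ℝ) (hs : s = μ ⬝ᵥ (Q *ᵥ μ))
    (hspos : 0 < s) (hRpos : 0 < R)
    (D X Y : ℝ → ℝ)
    (hD : ∀ γ, D γ = (γ + 2) ^ 2 * R ^ 2 - 4 * (γ + 1) * (1 + s) * (R ^ 2 + s * V))
    (hX : ∀ γ, X γ = ((γ + 2) * R - Real.sqrt (D γ)) / (2 * (1 + s)))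
    (hY : ∀ γ, Y γ = (γ / s) * (X γ * R - R ^ 2 - s * V))
    (ω : ℝ → Fin k → ℝ)
    (hω : ∀ γ, ω γ = S⁻¹ *ᵥ ((Y γ / γ) • (-one + ((γ + 1) / X γ) • μ) - X γ • μ)) :
    Tendsto ω atTop (nhds ((one ⬝ᵥ (S⁻¹ *ᵥ μ))⁻¹ • (S⁻¹ *ᵥ μ))) := by
  -- basic positivity facts
  have hone0 : one ≠ 0 := by
    rw [hone]; intro h
    have := congrFun h ⟨0, by omega⟩
    simp at this
  have hA : 0 < one ⬝ᵥ (S⁻¹ *ᵥ one) := by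
    have := hS.inv.dotProduct_mulVec_pos hone0
    simpa using this
  have hVpos : 0 < V := by rw [hV]; positivity
  have hBpos : 0 < one ⬝ᵥ (S⁻¹ *ᵥ μ) := by
    have hB : one ⬝ᵥ (S⁻¹ *ᵥ μ) = R * (one ⬝ᵥ (S⁻¹ *ᵥ one)) := by
      rw [hR, div_mul_cancel₀ _ (ne_of_gt hA)]
    rw [hB]; positivity
  have hs0 : s ≠ 0 := ne_of_gt hspos
  have h1s : (0:ℝ) < 1 + s := by linarith
  have hR0 : R ≠ 0 := ne_of_gt hRpos
  have hLpos : 0 < R ^ 2 + s * V := by positivity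
  -- limit of D γ / γ²
  have hDlim : Tendsto (fun γ => D γ / γ ^ 2) atTop (nhds (R ^ 2)) := by
    have hf : Continuous (fun t : ℝ =>
        (1 + 2 * t) ^ 2 * R ^ 2 - 4 * (t + t ^ 2) * (1 + s) * (R ^ 2 + s * V)) := by
      continuity
    have h0 : Tendsto (fun γ : ℝ =>
        (1 + 2 * γ⁻¹) ^ 2 * R ^ 2 - 4 * (γ⁻¹ + (γ⁻¹) ^ 2) * (1 + s) * (R ^ 2 + s * V))
        atTop (nhds (R ^ 2)) := by
      have h := (hf.tendsto 0).comp tendsto_inv_atTop_zero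
      norm_num at h
      convert h using 2 with γ
      rfl
    refine h0.congr' ?_
    filter_upwards [eventually_ge_atTop (1:ℝ)] with γ hγ
    have hγ0 : γ ≠ 0 := by linarith
    rw [hD]; field_simp
  have hR2pos : (0:ℝ) < R ^ 2 := by positivity
  have hDpos : ∀ᶠ γ in atTop, 0 < D γ := by
    filter_upwards [hDlim.eventually (lt_mem_nhds (show (0:ℝ) < R ^ 2 from hR2pos)),
      eventually_ge_atTop (1:ℝ)] with γ h1 h2
    have hγ0 : (0:ℝ) < γ ^ 2 := by positivity
    have hDγ : D γ = D γ / γ ^ 2 * γ ^ 2 := by field_simp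
    rw [hDγ]; positivity
  -- limit of √(D γ)/γ
  have hsqrt : Tendsto (fun γ => Real.sqrt (D γ) / γ) atTop (nhds R) := by
    have h0 : Tendsto (fun γ => Real.sqrt (D γ / γ ^ 2)) atTop (nhds R) := by
      have := (Real.continuous_sqrt.tendsto (R ^ 2)).comp hDlim
      simpa [Real.sqrt_sq hRpos.le, Function.comp_def] using this
    refine h0.congr' ?_
    filter_upwards [hDpos, eventually_ge_atTop (1:ℝ)] with γ h1 h2
    have hγ0 : (0:ℝ) < γ := by linarith
    rw [Real.sqrt_div h1.le, Real.sqrt_sq hγ0.le]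
  -- limit of X
  have hXlim : Tendsto X atTop (nhds ((R ^ 2 + s * V) / R)) := by
    have hnum : Tendsto (fun γ : ℝ => 2 * (1 + γ⁻¹) * (R ^ 2 + s * V)) atTop
        (nhds (2 * (1 + 0) * (R ^ 2 + s * V))) :=
      ((tendsto_const_nhds.add tendsto_inv_atTop_zero).const_mul 2).mul_const _
    have hden : Tendsto (fun γ : ℝ => (1 + 2 * γ⁻¹) * R + Real.sqrt (D γ) / γ) atTop
        (nhds ((1 + 2 * 0) * R + R)) :=
      ((tendsto_const_nhds.add (tendsto_inv_atTop_zero.const_mul 2)).mul_const R).add hsqrt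
    have h2R : (1 + 2 * (0:ℝ)) * R + R ≠ 0 := by norm_num; linarith
    have hdiv := hnum.div hden h2R
    have heq : ((R ^ 2 + s * V) / R) = 2 * (1 + 0) * (R ^ 2 + s * V) / ((1 + 2 * 0) * R + R) := by
      field_simp; ring
    rw [heq]
    refine hdiv.congr' ?_
    filter_upwards [hDpos, eventually_ge_atTop (1:ℝ)] with γ hDγ hγ1
    have hγ0 : (0:ℝ) < γ := by linarith
    have hu : Real.sqrt (D γ) ^ 2 = D γ := Real.sq_sqrt hDγ.le
    have hupos : 0 ≤ Real.sqrt (D γ) := Real.sqrt_nonneg _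
    have hdenpos : 0 < (1 + 2 * γ⁻¹) * R + Real.sqrt (D γ) / γ := by
      have h1 : (0:ℝ) < 1 + 2 * γ⁻¹ := by positivity
      positivity
    simp only [Pi.div_apply]
    rw [hX, div_eq_div_iff (ne_of_gt hdenpos) (by positivity)]
    have hγ0' : γ ≠ 0 := ne_of_gt hγ0
    field_simp
    linear_combination hu + hD γ
  -- a γ := Y γ / γ tends to 0
  have haeq : ∀ᶠ γ in atTop, Y γ / γ = (X γ * R - R ^ 2 - s * V) / s := by
    filter_upwards [eventually_ge_atTop (1:ℝ)] with γ hγ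
    have hγ0 : γ ≠ 0 := by linarith
    rw [hY]; field_simp
  have halim : Tendsto (fun γ => Y γ / γ) atTop (nhds 0) := by
    have h0 : Tendsto (fun γ => (X γ * R - R ^ 2 - s * V) / s) atTop
        (nhds (((R ^ 2 + s * V) / R * R - R ^ 2 - s * V) / s)) :=
      (((hXlim.mul_const R).sub_const (R ^ 2)).sub_const (s * V)).div_const s
    have hz : ((R ^ 2 + s * V) / R * R - R ^ 2 - s * V) / s = 0 := by
      field_simp
      ring
    rw [hz] at h0
    exact h0.congr' (by filter_upwards [haeq] with γ h; rw [h])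
  -- X γ is eventually positive
  have hXL : 0 < (R ^ 2 + s * V) / R := by positivity
  have hXne : ∀ᶠ γ in atTop, 0 < X γ :=
    (hXlim.eventually (lt_mem_nhds (show (R ^ 2 + s * V) / R / 2 < (R ^ 2 + s * V) / R by
      linarith))).mono (fun γ h => lt_of_lt_of_le (by positivity) h.le)
  -- coefficient of μ tends to V / R
  have hclim : Tendsto (fun γ => Y γ / γ * ((γ + 1) / X γ) - X γ) atTop (nhds (V / R)) := by
    have h0 : Tendsto (fun γ => (X γ - R) / s) atTop (nhds (((R ^ 2 + s * V) / R - R) / s)) :=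
      (hXlim.sub_const R).div_const s
    have hz : ((R ^ 2 + s * V) / R - R) / s = V / R := by field_simp; ring
    rw [hz] at h0
    refine h0.congr' ?_
    filter_upwards [hDpos, hXne, eventually_ge_atTop (1:ℝ)] with γ hDγ hXγ hγ1
    have hγ0 : (0:ℝ) < γ := by linarith
    have hγ0' : γ ≠ 0 := ne_of_gt hγ0
    have hXγ0 : X γ ≠ 0 := ne_of_gt hXγ
    have hu : Real.sqrt (D γ) ^ 2 = D γ := Real.sq_sqrt hDγ.le
    have h2 : 2 * (1 + s) * X γ = (γ + 2) * R - Real.sqrt (D γ) := by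
      rw [hX]; field_simp
    have hu2 : ((γ + 2) * R - 2 * (1 + s) * X γ) ^ 2 = D γ := by
      rw [show (γ + 2) * R - 2 * (1 + s) * X γ = Real.sqrt (D γ) by linarith]
      exact hu
    rw [hD] at hu2
    have hq4 : (1 + s) * ((1 + s) * X γ ^ 2 - (γ + 2) * R * X γ + (γ + 1) * (R ^ 2 + s * V)) = 0 := by
      linear_combination (1/4 : ℝ) * hu2
    have hq : (1 + s) * X γ ^ 2 - (γ + 2) * R * X γ + (γ + 1) * (R ^ 2 + s * V) = 0 :=
      (mul_eq_zero.mp hq4).resolve_left (ne_of_gt h1s)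
    have h5 : (γ + 1) * (X γ * R - R ^ 2 - s * V) = (1 + s) * X γ ^ 2 - X γ * R := by
      linear_combination -hq
    have e1 : Y γ / γ = (X γ * R - R ^ 2 - s * V) / s := by
      rw [hY]; field_simp
    rw [e1]
    field_simp
    linear_combination -h5
  -- rewrite ω as a linear combination of two fixed vectors
  have key : ∀ γ, ω γ = (-(Y γ / γ)) • (S⁻¹ *ᵥ one)
      + (Y γ / γ * ((γ + 1) / X γ) - X γ) • (S⁻¹ *ᵥ μ) := by
    intro γ
    rw [hω γ]
    have hvec : (Y γ / γ) • (-one + ((γ + 1) / X γ) • μ) - X γ • μ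
        = (-(Y γ / γ)) • one + (Y γ / γ * ((γ + 1) / X γ) - X γ) • μ := by
      funext i
      simp [smul_eq_mul]
      ring
    rw [hvec, mulVec_add, mulVec_smul, mulVec_smul]
  have hfinal : Tendsto ω atTop
      (nhds ((-(0:ℝ)) • (S⁻¹ *ᵥ one) + (V / R) • (S⁻¹ *ᵥ μ))) := by
    refine Tendsto.congr (fun γ => (key γ).symm) ?_
    exact (halim.neg.smul_const _).add (hclim.smul_const _)
  have hlim_eq : (-(0:ℝ)) • (S⁻¹ *ᵥ one) + (V / R) • (S⁻¹ *ᵥ μ)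
      = (one ⬝ᵥ (S⁻¹ *ᵥ μ))⁻¹ • (S⁻¹ *ᵥ μ) := by
    have hVR : V / R = (one ⬝ᵥ (S⁻¹ *ᵥ μ))⁻¹ := by
      rw [hV, hR]
      rw [div_div_eq_mul_div, inv_mul_cancel₀ (ne_of_gt hA), one_div]
    rw [hVR]
    simp
  rw [hlim_eq] at hfinal
  exact hfinal
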